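/- Let H be a nonzero complex Hilbert space and let B, C be bounded linear operators on H. Then for every α with 0 ≤ α ≤ 1, w(α·B² + (1 − α)·C²) ≤ w_e(B, C)². -/

import Mathlib

open scoped InnerProductSpace
open ContinuousLinearMap

variable {H : Type*} [NormedAddCommGroup H] [InnerProductSpace ℂ H]
  [CompleteSpace H] [Nontrivial H]

/-- The numerical radius of a bounded linear operator. -/
noncomputable def numRad (A : H →L[ℂ] H) : ℝ :=
  ⨆ x : {x : H // ‖x‖ = 1}, ‖⟪A x.1, x.1⟫_ℂ‖

/-- The Crawford number of a bounded linear operator. -/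
noncomputable def crawford (A : H →L[ℂ] H) : ℝ :=
  ⨅ x : {x : H // ‖x‖ = 1}, ‖⟪A x.1, x.1⟫_ℂ‖

/-- The Euclidean operator radius of a pair of bounded linear operators. -/
noncomputable def euclRad (B C : H →L[ℂ] H) : ℝ :=
  ⨆ x : {x : H // ‖x‖ = 1}, Real.sqrt (‖⟪B x.1, x.1⟫_ℂ‖ ^ 2 + ‖⟪C x.1, x.1⟫_ℂ‖ ^ 2)

/-- The absolute value `|A| = (A*A)^(1/2)` of a bounded linear operator. -/
noncomputable def opAbs (A : H →L[ℂ] H) : H →L[ℂ] H := CFC.sqrt (adjoint A * A)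

/-- The real part `Re(A) = (A + A*)/2` of a bounded linear operator. -/
noncomputable def reOp (A : H →L[ℂ] H) : H →L[ℂ] H := (2 : ℂ)⁻¹ • (A + adjoint A)

/-- The imaginary part `Im(A) = (A - A*)/(2i)` of a bounded linear operator. -/
noncomputable def imOp (A : H →L[ℂ] H) : H →L[ℂ] H := (2 * Complex.I)⁻¹ • (A - adjoint A)

omit [CompleteSpace H] [Nontrivial H] in
lemma aux_selfadj_norm_bound (P : H →L[ℂ] H) (e : ℝ) (he : 0 ≤ e)
    (hsym : ∀ u v : H, ⟪P u, v⟫_ℂ = ⟪u, P v⟫_ℂ)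
    (hP : ∀ z : H, |(⟪P z, z⟫_ℂ).re| ≤ e * ‖z‖ ^ 2)
    {x : H} (hx : ‖x‖ = 1) : ‖P x‖ ≤ e := by
  by_cases h0 : P x = 0
  · simp [h0, he]
  · set y : H := ((‖P x‖⁻¹ : ℝ) : ℂ) • P x with hy
    have hny : ‖y‖ = 1 := by
      rw [hy, norm_smul]
      simp [norm_ne_zero_iff.mpr h0]
    have expand : ⟪P (x + y), x + y⟫_ℂ - ⟪P (x - y), x - y⟫_ℂ
        = 2 * (⟪P x, y⟫_ℂ + ⟪P y, x⟫_ℂ) := by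
      simp only [map_add, map_sub, inner_add_left, inner_add_right, inner_sub_left,
        inner_sub_right]
      ring
    have hyx : ⟪P y, x⟫_ℂ = (starRingEnd ℂ) ⟪P x, y⟫_ℂ := by
      rw [hsym, inner_conj_symm]
    have hre : (⟪P (x + y), x + y⟫_ℂ).re - (⟪P (x - y), x - y⟫_ℂ).re
        = 4 * (⟪P x, y⟫_ℂ).re := by
      have h := congrArg Complex.re expand
      simp only [Complex.sub_re, Complex.mul_re, Complex.add_re, hyx, Complex.conj_re,
        Complex.conj_im, Complex.add_im, Complex.conj_im] at h
      norm_num at h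
      simp only [map_add, map_sub, inner_add_left, inner_add_right, inner_sub_left,
        inner_sub_right, Complex.add_re, Complex.sub_re]
      linarith
    have h1 : (⟪P x, y⟫_ℂ).re = ‖P x‖ := by
      rw [hy, inner_smul_right]
      have h2 : ⟪P x, P x⟫_ℂ = ((‖P x‖ : ℂ)) ^ 2 := inner_self_eq_norm_sq_to_K (P x)
      rw [h2, ← Complex.ofReal_pow, ← Complex.ofReal_mul, Complex.ofReal_re]
      field_simp [norm_ne_zero_iff.mpr h0]
    have hpar : ‖x + y‖ ^ 2 + ‖x - y‖ ^ 2 = 4 := by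
      have := parallelogram_law_with_norm ℂ x y
      nlinarith [this, hx, hny]
    have hb1 := hP (x + y)
    have hb2 := hP (x - y)
    have : 4 * ‖P x‖ ≤ 4 * e := by
      rw [← h1]
      calc 4 * (⟪P x, y⟫_ℂ).re
          = (⟪P (x + y), x + y⟫_ℂ).re - (⟪P (x - y), x - y⟫_ℂ).re := hre.symm
        _ ≤ e * ‖x + y‖ ^ 2 + e * ‖x - y‖ ^ 2 := by
            linarith [(abs_le.mp hb1).2, (abs_le.mp hb2).1]
        _ = e * (‖x + y‖ ^ 2 + ‖x - y‖ ^ 2) := by ring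
        _ = 4 * e := by rw [hpar]; ring
    linarith

omit [Nontrivial H] in
/-- pointwise power inequality: `|⟨T² x, x⟩| ≤ e²` for unit `x` if `|⟨T z, z⟩| ≤ e ‖z‖²`. -/
lemma aux_sq_bound (T : H →L[ℂ] H) (e : ℝ) (he : 0 ≤ e)
    (hT : ∀ z : H, ‖⟪T z, z⟫_ℂ‖ ≤ e * ‖z‖ ^ 2)
    {x : H} (hx : ‖x‖ = 1) : ‖⟪(T ^ 2) x, x⟫_ℂ‖ ≤ e ^ 2 := by
  set z : ℂ := ⟪(T ^ 2) x, x⟫_ℂ with hzdef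
  obtain ⟨u, hu1, hu2⟩ : ∃ u : ℂ, ‖u‖ = 1 ∧ (starRingEnd ℂ) u ^ 2 * z = (‖z‖ : ℂ) := by
    rcases eq_or_ne z 0 with h | h
    · exact ⟨1, by simp, by simp [h]⟩
    · refine ⟨Complex.exp ((z.arg / 2 : ℝ) * Complex.I), ?_, ?_⟩
      · rw [Complex.ofReal_div]
        exact_mod_cast Complex.norm_exp_ofReal_mul_I (z.arg / 2)
      · have hc : (starRingEnd ℂ) (Complex.exp ((z.arg / 2 : ℝ) * Complex.I))
            = Complex.exp (-((z.arg / 2 : ℝ) * Complex.I)) := by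
          rw [← Complex.exp_conj, map_mul, Complex.conj_ofReal, Complex.conj_I, mul_neg]
        rw [hc, ← Complex.exp_nat_mul]
        nth_rewrite 2 [← Complex.norm_mul_exp_arg_mul_I z]
        rw [mul_comm, mul_assoc, ← Complex.exp_add]
        have h2 : (z.arg : ℂ) * Complex.I + (2 : ℕ) * -(((z.arg / 2 : ℝ) : ℂ) * Complex.I) = 0 := by
          push_cast; ring
        rw [h2, Complex.exp_zero, mul_one]
  set S : H →L[ℂ] H := u • T with hSdef
  set P : H →L[ℂ] H := (2 : ℂ)⁻¹ • (S + adjoint S) with hPdef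
  set Q : H →L[ℂ] H := (2 * Complex.I)⁻¹ • (S - adjoint S) with hQdef
  have hsymP : ∀ v w : H, ⟪P v, w⟫_ℂ = ⟪v, P w⟫_ℂ := by
    intro v w
    simp only [hPdef, ContinuousLinearMap.smul_apply, ContinuousLinearMap.add_apply,
      inner_smul_left, inner_smul_right, inner_add_left, inner_add_right,
      ContinuousLinearMap.adjoint_inner_left, ContinuousLinearMap.adjoint_inner_right,
      map_inv₀, Complex.conj_ofNat]
    ring
  have hsymQ : ∀ v w : H, ⟪Q v, w⟫_ℂ = ⟪v, Q w⟫_ℂ := by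
    intro v w
    simp only [hQdef, ContinuousLinearMap.smul_apply, ContinuousLinearMap.sub_apply,
      inner_smul_left, inner_smul_right, inner_sub_left, inner_sub_right,
      ContinuousLinearMap.adjoint_inner_left, ContinuousLinearMap.adjoint_inner_right,
      map_inv₀, map_mul, Complex.conj_ofNat, Complex.conj_I]
    field_simp
    ring
  have hS : ∀ w : H, S w = P w + Complex.I • Q w := by
    intro w
    have hIs : Complex.I • Q w = (2 : ℂ)⁻¹ • (S w - adjoint S w) := by
      rw [hQdef]
      simp only [ContinuousLinearMap.smul_apply, ContinuousLinearMap.sub_apply, smul_smul]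
      congr 1
      rw [mul_inv]
      rw [mul_comm (2:ℂ)⁻¹ _, ← mul_assoc, Complex.mul_inv_cancel Complex.I_ne_zero, one_mul]
    rw [hIs, hPdef]
    simp only [ContinuousLinearMap.smul_apply, ContinuousLinearMap.add_apply,
      ContinuousLinearMap.sub_apply, ← smul_add]
    have : S w + adjoint S w + (S w - adjoint S w) = (2 : ℂ) • S w := by
      rw [two_smul]; abel
    rw [this, smul_smul, inv_mul_cancel₀ (two_ne_zero), one_smul]
  have hPz : ∀ w : H, |(⟪P w, w⟫_ℂ).re| ≤ e * ‖w‖ ^ 2 := by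
    intro w
    have hc : ⟪P w, w⟫_ℂ = (2 : ℂ)⁻¹ * (⟪S w, w⟫_ℂ + (starRingEnd ℂ) ⟪S w, w⟫_ℂ) := by
      simp only [hPdef, ContinuousLinearMap.smul_apply, ContinuousLinearMap.add_apply,
        inner_smul_left, inner_add_left, ContinuousLinearMap.adjoint_inner_left,
        map_inv₀, Complex.conj_ofNat]
      rw [← inner_conj_symm w (S w)]
    have hre : (⟪P w, w⟫_ℂ).re = (⟪S w, w⟫_ℂ).re := by
      rw [hc, Complex.add_conj]
      simp
    rw [hre]
    calc |(⟪S w, w⟫_ℂ).re| ≤ ‖⟪S w, w⟫_ℂ‖ := Complex.abs_re_le_norm _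
      _ = ‖⟪T w, w⟫_ℂ‖ := by
          rw [hSdef]
          simp only [ContinuousLinearMap.smul_apply, inner_smul_left]
          rw [norm_mul, RCLike.norm_conj, hu1, one_mul]
      _ ≤ e * ‖w‖ ^ 2 := hT w
  have hPx : ‖P x‖ ≤ e := aux_selfadj_norm_bound P e he hsymP hPz hx
  -- ⟨S(Sx), x⟩ = ‖z‖
  have h1 : ((‖z‖ : ℂ)) = ⟪S (S x), x⟫_ℂ := by
    have hss : S (S x) = u ^ 2 • ((T ^ 2) x) := by
      simp only [hSdef, ContinuousLinearMap.smul_apply, map_smul, smul_smul, pow_two,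
        ContinuousLinearMap.mul_apply]
    rw [hss, inner_smul_left, map_pow, hu2]
  -- expansion of ⟨S(Sx), x⟩
  have e1 : S (S x) = (P (P x) + Complex.I • Q (P x))
      + Complex.I • (P (Q x) + Complex.I • Q (Q x)) := by
    rw [hS x, map_add, map_smul, hS (P x), hS (Q x)]
  have e2 : ⟪S (S x), x⟫_ℂ = ⟪P x, P x⟫_ℂ + (-Complex.I) * ⟪P x, Q x⟫_ℂ
      + (-Complex.I) * (⟪Q x, P x⟫_ℂ + (-Complex.I) * ⟪Q x, Q x⟫_ℂ) := by
    rw [e1]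
    simp only [inner_add_left, inner_smul_left, Complex.conj_I, hsymP, hsymQ]
  have h2 : (⟪S (S x), x⟫_ℂ).re = ‖P x‖ ^ 2 - ‖Q x‖ ^ 2 := by
    have hqp : ⟪Q x, P x⟫_ℂ = (starRingEnd ℂ) ⟪P x, Q x⟫_ℂ :=
      (inner_conj_symm (Q x) (P x)).symm
    rw [e2, hqp, inner_self_eq_norm_sq_to_K (𝕜 := ℂ) (P x),
      inner_self_eq_norm_sq_to_K (𝕜 := ℂ) (Q x)]
    simp only [← Complex.ofReal_pow, Complex.add_re, Complex.add_im, Complex.mul_re, Complex.mul_im,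
      Complex.neg_re, Complex.neg_im, Complex.I_re, Complex.I_im, Complex.conj_re,
      Complex.conj_im, Complex.ofReal_re, Complex.ofReal_im]
    ring_nf
    norm_cast
  have hzre : ‖z‖ = ‖P x‖ ^ 2 - ‖Q x‖ ^ 2 := by
    have := congrArg Complex.re h1
    rwa [Complex.ofReal_re, h2] at this
  calc ‖z‖ = ‖P x‖ ^ 2 - ‖Q x‖ ^ 2 := hzre
    _ ≤ ‖P x‖ ^ 2 := by nlinarith [norm_nonneg (Q x)]
    _ ≤ e ^ 2 := by nlinarith [norm_nonneg (P x)]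

theorem stmt12 (B C : H →L[ℂ] H) (α : ℝ) (h0 : 0 ≤ α) (h1 : α ≤ 1) :
    numRad (α • B ^ 2 + (1 - α) • C ^ 2) ≤ (euclRad B C) ^ 2 := by
  rw [numRad, euclRad]
  set e : ℝ := ⨆ x : {x : H // ‖x‖ = 1},
      Real.sqrt (‖⟪B x.1, x.1⟫_ℂ‖ ^ 2 + ‖⟪C x.1, x.1⟫_ℂ‖ ^ 2) with hedef
  have hsph : Nonempty {x : H // ‖x‖ = 1} := by
    obtain ⟨x, hx⟩ := exists_ne (0 : H)
    exact ⟨⟨‖x‖⁻¹ • x, norm_smul_inv_norm hx⟩⟩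
  have hbbd : BddAbove (Set.range fun x : {x : H // ‖x‖ = 1} =>
      Real.sqrt (‖⟪B x.1, x.1⟫_ℂ‖ ^ 2 + ‖⟪C x.1, x.1⟫_ℂ‖ ^ 2)) := by
    refine ⟨Real.sqrt (‖B‖ ^ 2 + ‖C‖ ^ 2), ?_⟩
    rintro r ⟨x, rfl⟩
    apply Real.sqrt_le_sqrt
    have hbx : ‖⟪B x.1, x.1⟫_ℂ‖ ≤ ‖B‖ := by
      calc ‖⟪B x.1, x.1⟫_ℂ‖ ≤ ‖B x.1‖ * ‖x.1‖ := norm_inner_le_norm _ _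
        _ ≤ (‖B‖ * ‖x.1‖) * ‖x.1‖ := by gcongr; exact B.le_opNorm _
        _ = ‖B‖ := by rw [x.2]; ring
    have hcx : ‖⟪C x.1, x.1⟫_ℂ‖ ≤ ‖C‖ := by
      calc ‖⟪C x.1, x.1⟫_ℂ‖ ≤ ‖C x.1‖ * ‖x.1‖ := norm_inner_le_norm _ _
        _ ≤ (‖C‖ * ‖x.1‖) * ‖x.1‖ := by gcongr; exact C.le_opNorm _
        _ = ‖C‖ := by rw [x.2]; ring
    have := norm_nonneg (⟪B x.1, x.1⟫_ℂ)
    have := norm_nonneg (⟪C x.1, x.1⟫_ℂ)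
    nlinarith
  have he0 : 0 ≤ e := Real.iSup_nonneg fun _ => Real.sqrt_nonneg _
  have hBe : ∀ x : H, ‖x‖ = 1 → ‖⟪B x, x⟫_ℂ‖ ≤ e := by
    intro x hx
    have hle : Real.sqrt (‖⟪B x, x⟫_ℂ‖ ^ 2 + ‖⟪C x, x⟫_ℂ‖ ^ 2) ≤ e :=
      le_ciSup hbbd ⟨x, hx⟩
    have h2 : ‖⟪B x, x⟫_ℂ‖ = Real.sqrt (‖⟪B x, x⟫_ℂ‖ ^ 2) :=
      (Real.sqrt_sq (norm_nonneg _)).symm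
    rw [h2]
    exact le_trans (Real.sqrt_le_sqrt (by nlinarith [sq_nonneg ‖⟪C x, x⟫_ℂ‖])) hle
  have hCe : ∀ x : H, ‖x‖ = 1 → ‖⟪C x, x⟫_ℂ‖ ≤ e := by
    intro x hx
    have hle : Real.sqrt (‖⟪B x, x⟫_ℂ‖ ^ 2 + ‖⟪C x, x⟫_ℂ‖ ^ 2) ≤ e :=
      le_ciSup hbbd ⟨x, hx⟩
    have h2 : ‖⟪C x, x⟫_ℂ‖ = Real.sqrt (‖⟪C x, x⟫_ℂ‖ ^ 2) :=
      (Real.sqrt_sq (norm_nonneg _)).symm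
    rw [h2]
    exact le_trans (Real.sqrt_le_sqrt (by nlinarith [sq_nonneg ‖⟪B x, x⟫_ℂ‖])) hle
  have hhom : ∀ A : H →L[ℂ] H, (∀ x : H, ‖x‖ = 1 → ‖⟪A x, x⟫_ℂ‖ ≤ e) →
      ∀ w : H, ‖⟪A w, w⟫_ℂ‖ ≤ e * ‖w‖ ^ 2 := by
    intro A hA w
    rcases eq_or_ne w 0 with rfl | hw
    · simp
    · have hnw : ‖w‖ ≠ 0 := norm_ne_zero_iff.mpr hw
      set v : H := ((‖w‖⁻¹ : ℝ) : ℂ) • w with hv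
      have hnv : ‖v‖ = 1 := by
        rw [hv, norm_smul]; simp [hnw]
      have hw' : w = ((‖w‖ : ℝ) : ℂ) • v := by
        rw [hv, smul_smul, ← Complex.ofReal_mul, mul_inv_cancel₀ hnw]
        simp
      have hkey : ‖⟪A w, w⟫_ℂ‖ = ‖w‖ * ‖w‖ * ‖⟪A v, v⟫_ℂ‖ := by
        nth_rewrite 1 [hw']
        rw [map_smul, inner_smul_left, inner_smul_right, norm_mul, norm_mul,
          RCLike.norm_conj]
        simp [abs_of_nonneg (norm_nonneg w)]
        field_simp
      rw [hkey]
      have := hA v hnv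
      nlinarith [norm_nonneg w, norm_nonneg (⟪A v, v⟫_ℂ)]
  have hB2 : ∀ x : {x : H // ‖x‖ = 1}, ‖⟪(B ^ 2) x.1, x.1⟫_ℂ‖ ≤ e ^ 2 :=
    fun x => aux_sq_bound B e he0 (hhom B hBe) x.2
  have hC2 : ∀ x : {x : H // ‖x‖ = 1}, ‖⟪(C ^ 2) x.1, x.1⟫_ℂ‖ ≤ e ^ 2 :=
    fun x => aux_sq_bound C e he0 (hhom C hCe) x.2
  apply ciSup_le
  intro x
  have happ : (α • B ^ 2 + (1 - α) • C ^ 2) x.1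
      = ((α : ℂ) • (B ^ 2) x.1) + (((1 - α : ℝ) : ℂ) • (C ^ 2) x.1) := by
    simp only [ContinuousLinearMap.add_apply, ContinuousLinearMap.smul_apply]
    rw [RCLike.real_smul_eq_coe_smul (K := ℂ), RCLike.real_smul_eq_coe_smul (K := ℂ)]
    norm_cast
  calc ‖⟪(α • B ^ 2 + (1 - α) • C ^ 2) x.1, x.1⟫_ℂ‖
      = ‖(starRingEnd ℂ) (α : ℂ) * ⟪(B ^ 2) x.1, x.1⟫_ℂ
          + (starRingEnd ℂ) ((1 - α : ℝ) : ℂ) * ⟪(C ^ 2) x.1, x.1⟫_ℂ‖ := by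
        rw [happ, inner_add_left, inner_smul_left, inner_smul_left]
    _ ≤ ‖(starRingEnd ℂ) (α : ℂ) * ⟪(B ^ 2) x.1, x.1⟫_ℂ‖
          + ‖(starRingEnd ℂ) ((1 - α : ℝ) : ℂ) * ⟪(C ^ 2) x.1, x.1⟫_ℂ‖ := norm_add_le _ _
    _ = α * ‖⟪(B ^ 2) x.1, x.1⟫_ℂ‖ + (1 - α) * ‖⟪(C ^ 2) x.1, x.1⟫_ℂ‖ := by
        rw [norm_mul, norm_mul, RCLike.norm_conj, RCLike.norm_conj,
          Complex.norm_real, Complex.norm_real, Real.norm_eq_abs, Real.norm_eq_abs,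
          abs_of_nonneg h0, abs_of_nonneg (by linarith : (0:ℝ) ≤ 1 - α)]
    _ ≤ α * e ^ 2 + (1 - α) * e ^ 2 := by
        have := hB2 x
        have := hC2 x
        have hb0 := norm_nonneg (⟪(B ^ 2) x.1, x.1⟫_ℂ)
        have hc0 := norm_nonneg (⟪(C ^ 2) x.1, x.1⟫_ℂ)
        nlinarith
    _ = e ^ 2 := by ring
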